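/- Let ω₁ = e₁∧e₂ + e₃∧e₄, ω₂ = e₂∧e₃ + e₄∧e₅, ω₃ = e₁∧e₅ + e₂∧e₄ in Λ²ℂ⁵ (with e₁,…,e₅ the standard basis). Then no nonzero linear combination ω = aω₁ + bω₂ + cω₃ satisfies ω∧ω = 0 in Λ⁴ℂ⁵. -/

import Mathlib

open ExteriorAlgebra

noncomputable def ee (i : Fin 5) : Fin 5 → ℂ := Pi.single i 1

/-- ω₁ = e₁∧e₂ + e₃∧e₄ (0-indexed as e₀∧e₁ + e₂∧e₃). -/
noncomputable def ω₁ : ExteriorAlgebra ℂ (Fin 5 → ℂ) :=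
  ι ℂ (ee 0) * ι ℂ (ee 1) + ι ℂ (ee 2) * ι ℂ (ee 3)

/-- ω₂ = e₂∧e₃ + e₄∧e₅. -/
noncomputable def ω₂ : ExteriorAlgebra ℂ (Fin 5 → ℂ) :=
  ι ℂ (ee 1) * ι ℂ (ee 2) + ι ℂ (ee 3) * ι ℂ (ee 4)

/-- ω₃ = e₁∧e₅ + e₂∧e₄. -/
noncomputable def ω₃ : ExteriorAlgebra ℂ (Fin 5 → ℂ) :=
  ι ℂ (ee 0) * ι ℂ (ee 4) + ι ℂ (ee 1) * ι ℂ (ee 3)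

noncomputable def gg (σ : Fin 4 → Fin 5) : (Fin 5 → ℂ) [⋀^Fin 4]→ₗ[ℂ] ℂ :=
  Matrix.detRowAlternating.compLinearMap (LinearMap.funLeft ℂ ℂ σ)

noncomputable def fam (σ : Fin 4 → Fin 5) : ∀ i : ℕ, (Fin 5 → ℂ) [⋀^Fin i]→ₗ[ℂ] ℂ :=
  fun i => if h : i = 4 then h ▸ gg σ else 0

noncomputable def F (σ : Fin 4 → Fin 5) : ExteriorAlgebra ℂ (Fin 5 → ℂ) →ₗ[ℂ] ℂ :=
  liftAlternating (fam σ)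

theorem F_quad (σ : Fin 4 → Fin 5) (v : Fin 4 → (Fin 5 → ℂ)) :
    F σ (ι ℂ (v 0) * ι ℂ (v 1) * ι ℂ (v 2) * ι ℂ (v 3)) =
      Matrix.det (fun i j => v i (σ j)) := by
  have : ι ℂ (v 0) * ι ℂ (v 1) * ι ℂ (v 2) * ι ℂ (v 3) = ιMulti ℂ 4 v := by
    rw [ιMulti_apply]
    simp [List.ofFn_succ, mul_assoc]
  rw [this, F, liftAlternating_apply_ιMulti, fam]
  simp [gg, Matrix.detRowAlternating]
  rfl

theorem F_quad' (σ : Fin 4 → Fin 5) (x y z w : Fin 5 → ℂ) :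
    F σ (ι ℂ x * ι ℂ y * (ι ℂ z * ι ℂ w)) =
      Matrix.det (Matrix.of fun (i : Fin 4) (j : Fin 4) => ![x, y, z, w] i (σ j)) := by
  rw [← mul_assoc]
  exact F_quad σ ![x, y, z, w]

theorem det_fin_four' {R : Type*} [CommRing R] (M : Matrix (Fin 4) (Fin 4) R) :
    M.det =
      M 0 0 * (M 1 1 * (M 2 2 * M 3 3 - M 2 3 * M 3 2) - M 1 2 * (M 2 1 * M 3 3 - M 2 3 * M 3 1)
        + M 1 3 * (M 2 1 * M 3 2 - M 2 2 * M 3 1))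
      - M 0 1 * (M 1 0 * (M 2 2 * M 3 3 - M 2 3 * M 3 2) - M 1 2 * (M 2 0 * M 3 3 - M 2 3 * M 3 0)
        + M 1 3 * (M 2 0 * M 3 2 - M 2 2 * M 3 0))
      + M 0 2 * (M 1 0 * (M 2 1 * M 3 3 - M 2 3 * M 3 1) - M 1 1 * (M 2 0 * M 3 3 - M 2 3 * M 3 0)
        + M 1 3 * (M 2 0 * M 3 1 - M 2 1 * M 3 0))
      - M 0 3 * (M 1 0 * (M 2 1 * M 3 2 - M 2 2 * M 3 1) - M 1 1 * (M 2 0 * M 3 2 - M 2 2 * M 3 0)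
        + M 1 2 * (M 2 0 * M 3 1 - M 2 1 * M 3 0)) := by
  have h3 : (Fin.succ 2 : Fin 4) = 3 := rfl
  have h2 : (Fin.castSucc 2 : Fin 4) = 2 := rfl
  rw [Matrix.det_succ_row_zero]
  have h22 : Fin.succAbove (2 : Fin 4) 2 = 3 := by decide
  have h32 : Fin.succAbove (3 : Fin 4) 2 = 2 := by decide
  have h12 : Fin.succAbove (1 : Fin 4) 2 = 3 := by decide
  simp [Fin.sum_univ_succ, Matrix.det_fin_three, Matrix.submatrix_apply, Fin.succ_succAbove_zero, Fin.succ_succAbove_succ, Fin.succAbove_ne_zero_zero, h22, h32, h12]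
  ring

theorem L1_11 : F ![0,1,2,3] (ω₁ * ω₁) = 2 := by
  simp only [ω₁, ω₁, add_mul, mul_add, map_add, F_quad']
  simp [det_fin_four', ee, Pi.single_apply, Matrix.vecHead, Matrix.vecTail]
  all_goals norm_num

theorem L1_12 : F ![0,1,2,3] (ω₁ * ω₂) = 0 := by
  simp only [ω₁, ω₂, add_mul, mul_add, map_add, F_quad']
  simp [det_fin_four', ee, Pi.single_apply, Matrix.vecHead, Matrix.vecTail]
  all_goals norm_num

theorem L1_13 : F ![0,1,2,3] (ω₁ * ω₃) = 0 := by
  simp only [ω₁, ω₃, add_mul, mul_add, map_add, F_quad']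
  simp [det_fin_four', ee, Pi.single_apply, Matrix.vecHead, Matrix.vecTail]
  all_goals norm_num

theorem L1_21 : F ![0,1,2,3] (ω₂ * ω₁) = 0 := by
  simp only [ω₂, ω₁, add_mul, mul_add, map_add, F_quad']
  simp [det_fin_four', ee, Pi.single_apply, Matrix.vecHead, Matrix.vecTail]
  all_goals norm_num

theorem L1_22 : F ![0,1,2,3] (ω₂ * ω₂) = 0 := by
  simp only [ω₂, ω₂, add_mul, mul_add, map_add, F_quad']
  simp [det_fin_four', ee, Pi.single_apply, Matrix.vecHead, Matrix.vecTail]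
  all_goals norm_num

theorem L1_23 : F ![0,1,2,3] (ω₂ * ω₃) = 0 := by
  simp only [ω₂, ω₃, add_mul, mul_add, map_add, F_quad']
  simp [det_fin_four', ee, Pi.single_apply, Matrix.vecHead, Matrix.vecTail]
  all_goals norm_num

theorem L1_31 : F ![0,1,2,3] (ω₃ * ω₁) = 0 := by
  simp only [ω₃, ω₁, add_mul, mul_add, map_add, F_quad']
  simp [det_fin_four', ee, Pi.single_apply, Matrix.vecHead, Matrix.vecTail]
  all_goals norm_num

theorem L1_32 : F ![0,1,2,3] (ω₃ * ω₂) = 0 := by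
  simp only [ω₃, ω₂, add_mul, mul_add, map_add, F_quad']
  simp [det_fin_four', ee, Pi.single_apply, Matrix.vecHead, Matrix.vecTail]
  all_goals norm_num

theorem L1_33 : F ![0,1,2,3] (ω₃ * ω₃) = 0 := by
  simp only [ω₃, ω₃, add_mul, mul_add, map_add, F_quad']
  simp [det_fin_four', ee, Pi.single_apply, Matrix.vecHead, Matrix.vecTail]
  all_goals norm_num

theorem L2_11 : F ![1,2,3,4] (ω₁ * ω₁) = 0 := by
  simp only [ω₁, ω₁, add_mul, mul_add, map_add, F_quad']
  simp [det_fin_four', ee, Pi.single_apply, Matrix.vecHead, Matrix.vecTail]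
  all_goals norm_num

theorem L2_12 : F ![1,2,3,4] (ω₁ * ω₂) = 0 := by
  simp only [ω₁, ω₂, add_mul, mul_add, map_add, F_quad']
  simp [det_fin_four', ee, Pi.single_apply, Matrix.vecHead, Matrix.vecTail]
  all_goals norm_num

theorem L2_13 : F ![1,2,3,4] (ω₁ * ω₃) = 0 := by
  simp only [ω₁, ω₃, add_mul, mul_add, map_add, F_quad']
  simp [det_fin_four', ee, Pi.single_apply, Matrix.vecHead, Matrix.vecTail]
  all_goals norm_num

theorem L2_21 : F ![1,2,3,4] (ω₂ * ω₁) = 0 := by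
  simp only [ω₂, ω₁, add_mul, mul_add, map_add, F_quad']
  simp [det_fin_four', ee, Pi.single_apply, Matrix.vecHead, Matrix.vecTail]
  all_goals norm_num

theorem L2_22 : F ![1,2,3,4] (ω₂ * ω₂) = 2 := by
  simp only [ω₂, ω₂, add_mul, mul_add, map_add, F_quad']
  simp [det_fin_four', ee, Pi.single_apply, Matrix.vecHead, Matrix.vecTail]
  all_goals norm_num

theorem L2_23 : F ![1,2,3,4] (ω₂ * ω₃) = 0 := by
  simp only [ω₂, ω₃, add_mul, mul_add, map_add, F_quad']
  simp [det_fin_four', ee, Pi.single_apply, Matrix.vecHead, Matrix.vecTail]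
  all_goals norm_num

theorem L2_31 : F ![1,2,3,4] (ω₃ * ω₁) = 0 := by
  simp only [ω₃, ω₁, add_mul, mul_add, map_add, F_quad']
  simp [det_fin_four', ee, Pi.single_apply, Matrix.vecHead, Matrix.vecTail]
  all_goals norm_num

theorem L2_32 : F ![1,2,3,4] (ω₃ * ω₂) = 0 := by
  simp only [ω₃, ω₂, add_mul, mul_add, map_add, F_quad']
  simp [det_fin_four', ee, Pi.single_apply, Matrix.vecHead, Matrix.vecTail]
  all_goals norm_num

theorem L2_33 : F ![1,2,3,4] (ω₃ * ω₃) = 0 := by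
  simp only [ω₃, ω₃, add_mul, mul_add, map_add, F_quad']
  simp [det_fin_four', ee, Pi.single_apply, Matrix.vecHead, Matrix.vecTail]
  all_goals norm_num

theorem L3_11 : F ![0,1,3,4] (ω₁ * ω₁) = 0 := by
  simp only [ω₁, ω₁, add_mul, mul_add, map_add, F_quad']
  simp [det_fin_four', ee, Pi.single_apply, Matrix.vecHead, Matrix.vecTail]
  all_goals norm_num

theorem L3_12 : F ![0,1,3,4] (ω₁ * ω₂) = 1 := by
  simp only [ω₁, ω₂, add_mul, mul_add, map_add, F_quad']
  simp [det_fin_four', ee, Pi.single_apply, Matrix.vecHead, Matrix.vecTail]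
  all_goals norm_num

theorem L3_13 : F ![0,1,3,4] (ω₁ * ω₃) = 0 := by
  simp only [ω₁, ω₃, add_mul, mul_add, map_add, F_quad']
  simp [det_fin_four', ee, Pi.single_apply, Matrix.vecHead, Matrix.vecTail]
  all_goals norm_num

theorem L3_21 : F ![0,1,3,4] (ω₂ * ω₁) = 1 := by
  simp only [ω₂, ω₁, add_mul, mul_add, map_add, F_quad']
  simp [det_fin_four', ee, Pi.single_apply, Matrix.vecHead, Matrix.vecTail]
  all_goals norm_num

theorem L3_22 : F ![0,1,3,4] (ω₂ * ω₂) = 0 := by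
  simp only [ω₂, ω₂, add_mul, mul_add, map_add, F_quad']
  simp [det_fin_four', ee, Pi.single_apply, Matrix.vecHead, Matrix.vecTail]
  all_goals norm_num

theorem L3_23 : F ![0,1,3,4] (ω₂ * ω₃) = 0 := by
  simp only [ω₂, ω₃, add_mul, mul_add, map_add, F_quad']
  simp [det_fin_four', ee, Pi.single_apply, Matrix.vecHead, Matrix.vecTail]
  all_goals norm_num

theorem L3_31 : F ![0,1,3,4] (ω₃ * ω₁) = 0 := by
  simp only [ω₃, ω₁, add_mul, mul_add, map_add, F_quad']
  simp [det_fin_four', ee, Pi.single_apply, Matrix.vecHead, Matrix.vecTail]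
  all_goals norm_num

theorem L3_32 : F ![0,1,3,4] (ω₃ * ω₂) = 0 := by
  simp only [ω₃, ω₂, add_mul, mul_add, map_add, F_quad']
  simp [det_fin_four', ee, Pi.single_apply, Matrix.vecHead, Matrix.vecTail]
  all_goals norm_num

theorem L3_33 : F ![0,1,3,4] (ω₃ * ω₃) = 2 := by
  simp only [ω₃, ω₃, add_mul, mul_add, map_add, F_quad']
  simp [det_fin_four', ee, Pi.single_apply, Matrix.vecHead, Matrix.vecTail]
  all_goals norm_num

theorem stmt4 (a b c : ℂ) (h : ¬(a = 0 ∧ b = 0 ∧ c = 0)) :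
    (a • ω₁ + b • ω₂ + c • ω₃) * (a • ω₁ + b • ω₂ + c • ω₃) ≠ 0 := by
  intro hc
  have key : ∀ σ : Fin 4 → Fin 5,
      F σ ((a • ω₁ + b • ω₂ + c • ω₃) * (a • ω₁ + b • ω₂ + c • ω₃)) = 0 := by
    intro σ; rw [hc, map_zero]
  have h1 := key ![0,1,2,3]
  have h2 := key ![1,2,3,4]
  have h3 := key ![0,1,3,4]
  simp only [add_mul, mul_add, smul_mul_assoc, mul_smul_comm, map_add, map_smul,
    L1_11, L1_12, L1_13, L1_21, L1_22, L1_23, L1_31, L1_32, L1_33,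
    smul_eq_mul, mul_zero, mul_one, add_zero, zero_add] at h1
  simp only [add_mul, mul_add, smul_mul_assoc, mul_smul_comm, map_add, map_smul,
    L2_11, L2_12, L2_13, L2_21, L2_22, L2_23, L2_31, L2_32, L2_33,
    smul_eq_mul, mul_zero, mul_one, add_zero, zero_add] at h2
  simp only [add_mul, mul_add, smul_mul_assoc, mul_smul_comm, map_add, map_smul,
    L3_11, L3_12, L3_13, L3_21, L3_22, L3_23, L3_31, L3_32, L3_33,
    smul_eq_mul, mul_zero, mul_one, add_zero, zero_add] at h3
  have ha : a = 0 := by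
    have : a * a = 0 := by linear_combination h1 / 2
    exact mul_self_eq_zero.mp this
  have hb : b = 0 := by
    have : b * b = 0 := by linear_combination h2 / 2
    exact mul_self_eq_zero.mp this
  have hcc : c = 0 := by
    have : c * c = 0 := by linear_combination h3 / 2 - b * ha
    exact mul_self_eq_zero.mp this
  exact h ⟨ha, hb, hcc⟩
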